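/- For every n ≥ 2 and every h with 1 ≤ h ≤ n−2, the number of bargraphs of semiperimeter n whose leftmost horizontal segment has width h equals the number of bargraphs of semiperimeter n having exactly h−1 initial columns of height 1. -/

import Mathlib

/-- Steps of bargraphs / Motzkin paths. -/
inductive Step where
  | U : Step
  | H : Step
  | D : Step
deriving DecidableEq

/-- Vertical displacement of a step. -/
def Step.val : Step → ℤ
  | .U => 1
  | .H => 0
  | .D => -1

/-- Mirror of a step (swap U and D). -/
def Step.mirror : Step → Step
  | .U => .D
  | .H => .H
  | .D => .U

/-- Final height of a word. -/
def hgt (w : List Step) : ℤ := (w.map Step.val).sum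

/-- A Motzkin path prefix: never goes below the x-axis. -/
def IsMotzkinPrefix (w : List Step) : Prop := ∀ p : List Step, p <+: w → 0 ≤ hgt p

/-- A Motzkin path: never below the x-axis, ends at height 0. -/
def IsMotzkin (w : List Step) : Prop := IsMotzkinPrefix w ∧ hgt w = 0

/-- No peak `UD` and no valley `DU`. -/
def Cornerless (w : List Step) : Prop :=
  ¬ [Step.U, Step.D] <:+: w ∧ ¬ [Step.D, Step.U] <:+: w

/-- A bargraph: starts at the origin, ends on the x-axis, stays strictly above the
x-axis except at the endpoints, and has no factor `UD` or `DU`. -/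
def IsBargraph (w : List Step) : Prop :=
  2 ≤ w.length ∧ hgt w = 0 ∧
    (∀ p : List Step, p <+: w → p ≠ [] → p ≠ w → 0 < hgt p) ∧ Cornerless w

/-- Semiperimeter: number of `U` steps plus number of `H` steps. -/
def semi (w : List Step) : ℕ := w.count Step.U + w.count Step.H

/-- Length of the initial run of `U` steps. -/
def leadU : List Step → ℕ
  | Step.U :: rest => leadU rest + 1
  | _ => 0

/-- Length of the initial run of `H` steps. -/
def leadH : List Step → ℕ
  | Step.H :: rest => leadH rest + 1
  | _ => 0

/-- Length of the initial run of `D` steps. -/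
def leadD : List Step → ℕ
  | Step.D :: rest => leadD rest + 1
  | _ => 0

/-- Length of the first maximal run of `D` steps (0 if none). -/
def firstDescLen : List Step → ℕ
  | [] => 0
  | Step.D :: rest => leadD rest + 1
  | _ :: rest => firstDescLen rest

/-- Number of occurrences of the two-letter factor `a b`. -/
def cnt2 (a b : Step) : List Step → ℕ
  | x :: y :: rest => (if x = a ∧ y = b then 1 else 0) + cnt2 a b (y :: rest)
  | _ => 0

/-- Heights of the columns (`H` steps), starting from a given height. -/
def colHeights : ℤ → List Step → List ℤ
  | _, [] => []
  | h, Step.U :: rest => colHeights (h + 1) rest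
  | h, Step.H :: rest => h :: colHeights h rest
  | h, Step.D :: rest => colHeights (h - 1) rest

/-- Width of the leftmost maximal horizontal segment (0 if none). -/
def lhsW : List Step → ℕ
  | [] => 0
  | Step.H :: rest => leadH rest + 1
  | _ :: rest => lhsW rest

/-- Delete `h` steps at the start of the leftmost horizontal segment. -/
def stripLeadH (h : ℕ) : List Step → List Step
  | [] => []
  | Step.H :: rest => List.drop h (Step.H :: rest)
  | s :: rest => s :: stripLeadH h rest

/-- Number of initial columns of height 1: largest `j` such that the word begins `U H^j`. -/
def iuc : List Step → ℕ
  | Step.U :: rest => leadH rest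
  | _ => 0

/-- Number of maximal horizontal segments. -/
def hsCount : List Step → ℕ
  | [] => 0
  | [Step.H] => 1
  | [_] => 0
  | a :: b :: rest => (if a = Step.H ∧ b ≠ Step.H then 1 else 0) + hsCount (b :: rest)

/-- Mirror image: reverse the word and swap `U` with `D`. -/
def mir (w : List Step) : List Step := (w.reverse).map Step.mirror

/-- Shape of strictly alternating bargraphs:
`U^{i₁} H D^{k₁} H U^{i₂} H D^{k₂} H ⋯ U^{iₘ} H D^{kₘ}` with all `iᵣ, kᵣ ≥ 1`. -/
inductive SAShape : List Step → Prop where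
  | base (i k : ℕ) : 1 ≤ i → 1 ≤ k →
      SAShape (List.replicate i Step.U ++ [Step.H] ++ List.replicate k Step.D)
  | cons (i k : ℕ) (w : List Step) : 1 ≤ i → 1 ≤ k → SAShape w →
      SAShape (List.replicate i Step.U ++ [Step.H] ++ List.replicate k Step.D ++ [Step.H] ++ w)

/-- A strictly alternating bargraph. -/
def IsStrictAlt (w : List Step) : Prop := IsBargraph w ∧ SAShape w

/-- A secondary structure on `{0, …, m-1}`: all consecutive edges are present, every
vertex has at most one non-consecutive neighbour, and there are no crossing edges. -/
def IsSecondaryStructure {m : ℕ} (G : SimpleGraph (Fin m)) : Prop :=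
  (∀ i j : Fin m, (i : ℕ) + 1 = (j : ℕ) → G.Adj i j) ∧
  (∀ i j k : Fin m, G.Adj i j → G.Adj i k →
      (i : ℕ) + 1 ≠ (j : ℕ) → (j : ℕ) + 1 ≠ (i : ℕ) →
      (i : ℕ) + 1 ≠ (k : ℕ) → (k : ℕ) + 1 ≠ (i : ℕ) → j = k) ∧
  ¬ ∃ i j k l : Fin m, (i : ℕ) < (j : ℕ) ∧ (j : ℕ) < (k : ℕ) ∧ (k : ℕ) < (l : ℕ) ∧
      G.Adj i k ∧ G.Adj j l

/-- Generating function of bargraphs: `x` (variable 0) marks `H` steps,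
`y` (variable 1) marks `U` steps. -/
noncomputable def BG : MvPowerSeries (Fin 2) ℚ :=
  fun d => (Nat.card {w : List Step //
    IsBargraph w ∧ w.count Step.H = d 0 ∧ w.count Step.U = d 1} : ℚ)

/-- Generating function of cornerless Motzkin paths. -/
noncomputable def MG : MvPowerSeries (Fin 2) ℚ :=
  fun d => (Nat.card {w : List Step //
    IsMotzkin w ∧ Cornerless w ∧ w.count Step.H = d 0 ∧ w.count Step.U = d 1} : ℚ)

/-- Generating function of bargraphs avoiding the factor `DH`. -/
noncomputable def BDH : MvPowerSeries (Fin 2) ℚ :=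
  fun d => (Nat.card {w : List Step //
    IsBargraph w ∧ ¬ [Step.D, Step.H] <:+: w ∧
      w.count Step.H = d 0 ∧ w.count Step.U = d 1} : ℚ)

/-- Generating function of bargraphs avoiding the factors `DH` and `HH`. -/
noncomputable def BDHHH : MvPowerSeries (Fin 2) ℚ :=
  fun d => (Nat.card {w : List Step //
    IsBargraph w ∧ ¬ [Step.D, Step.H] <:+: w ∧ ¬ [Step.H, Step.H] <:+: w ∧
      w.count Step.H = d 0 ∧ w.count Step.U = d 1} : ℚ)

/-- Generating function of cornerless Motzkin path prefixes ending at height `h`. -/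
noncomputable def Pgf (h : ℕ) : MvPowerSeries (Fin 2) ℚ :=
  fun d => (Nat.card {w : List Step //
    IsMotzkinPrefix w ∧ Cornerless w ∧ hgt w = (h : ℤ) ∧
      w.count Step.H = d 0 ∧ w.count Step.U = d 1} : ℚ)

/-- Decomposition `G = U^a G₁ H G₂ D^a` of a strictly alternating bargraph. -/
def SADecomp (t : ℕ × List Step × List Step) (G : List Step) : Prop :=
  1 ≤ t.1 ∧ IsStrictAlt t.2.1 ∧ IsStrictAlt (Step.U :: (t.2.2 ++ [Step.D])) ∧
    G = List.replicate t.1 Step.U ++ t.2.1 ++ [Step.H] ++ t.2.2 ++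
      List.replicate t.1 Step.D

namespace BGaux
open Step List

abbrev rep (k : ℕ) (s : Step) : List Step := List.replicate k s

/-! ### hgt lemmas -/

lemma hgt_nil : hgt ([] : List Step) = 0 := rfl

lemma hgt_cons (s : Step) (l : List Step) : hgt (s :: l) = s.val + hgt l := by
  simp [hgt]

lemma hgt_append (u v : List Step) : hgt (u ++ v) = hgt u + hgt v := by
  simp [hgt]

lemma hgt_rep (k : ℕ) (s : Step) : hgt (rep k s) = k * s.val := by
  induction k with
  | zero => simp [hgt]
  | succ n ih =>
    rw [rep, List.replicate_succ, hgt_cons, ih]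
    push_cast; ring

lemma hgt_repU (k : ℕ) : hgt (rep k U) = k := by simp [hgt_rep, Step.val]

lemma hgt_repH (k : ℕ) : hgt (rep k H) = 0 := by simp [hgt_rep, Step.val]

/-! ### nonneg height for D-free words -/

lemma hgt_nonneg_of_not_D {p : List Step} (h : D ∉ p) : 0 ≤ hgt p := by
  induction p with
  | nil => simp [hgt_nil]
  | cons s l ih =>
    simp only [List.mem_cons, not_or] at h
    have h1 : 0 ≤ s.val := by cases s <;> simp_all [Step.val]
    have := ih h.2
    rw [hgt_cons]; omega

lemma hgt_pos_of_D_free {p : List Step} (h : D ∉ p) (hh : p.head? = some U) :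
    0 < hgt p := by
  cases p with
  | nil => simp at hh
  | cons s l =>
    simp only [List.head?_cons, Option.some.injEq] at hh
    subst hh
    simp only [List.mem_cons, not_or] at h
    have := hgt_nonneg_of_not_D h.2
    rw [hgt_cons]; simp [Step.val]; omega

/-! ### lead lemmas -/

lemma leadU_H (l : List Step) : leadU (H :: l) = 0 := rfl
lemma leadU_nil : leadU [] = 0 := rfl
lemma leadH_U (l : List Step) : leadH (U :: l) = 0 := rfl

lemma leadU_U (l : List Step) : leadU (U :: l) = leadU l + 1 := rfl
lemma leadH_H (l : List Step) : leadH (H :: l) = leadH l + 1 := rfl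

lemma leadU_repU_append (a : ℕ) (l : List Step) :
    leadU (rep a U ++ l) = a + leadU l := by
  induction a with
  | zero => simp [rep]
  | succ n ih => rw [rep, List.replicate_succ, List.cons_append, leadU_U, ih]; omega

lemma leadH_repH_append (a : ℕ) (l : List Step) :
    leadH (rep a H ++ l) = a + leadH l := by
  induction a with
  | zero => simp [rep]
  | succ n ih => rw [rep, List.replicate_succ, List.cons_append, leadH_H, ih]; omega

lemma leadU_eq_zero {l : List Step} (h : l.head? ≠ some U) : leadU l = 0 := by
  match l with
  | [] => rfl
  | U :: r => simp at h
  | H :: r => rfl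
  | D :: r => rfl

lemma leadH_eq_zero {l : List Step} (h : l.head? ≠ some H) : leadH l = 0 := by
  match l with
  | [] => rfl
  | H :: r => simp at h
  | U :: r => rfl
  | D :: r => rfl

/-- canonical decomposition by leading U-run -/
lemma leadU_decomp (w : List Step) :
    w = rep (leadU w) U ++ w.drop (leadU w) ∧ (w.drop (leadU w)).head? ≠ some U := by
  induction w with
  | nil => simp [leadU_nil]
  | cons s l ih =>
    cases s with
    | U =>
      have : leadU (U :: l) = leadU l + 1 := rfl
      rw [this]
      constructor
      · simpa [rep, List.replicate_succ] using ih.1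
      · simpa using ih.2
    | H => simp [leadU]
    | D => simp [leadU]

lemma leadH_decomp (w : List Step) :
    w = rep (leadH w) H ++ w.drop (leadH w) ∧ (w.drop (leadH w)).head? ≠ some H := by
  induction w with
  | nil => simp [leadH]
  | cons s l ih =>
    cases s with
    | H =>
      have : leadH (H :: l) = leadH l + 1 := rfl
      rw [this]
      constructor
      · simpa [rep, List.replicate_succ] using ih.1
      · simpa using ih.2
    | U => simp [leadH]
    | D => simp [leadH]

/-! ### lhsW / iuc lemmas -/

lemma lhsW_H (l : List Step) : lhsW (H :: l) = leadH l + 1 := rfl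

lemma lhsW_repU_append (a : ℕ) (l : List Step) : lhsW (rep a U ++ l) = lhsW l := by
  induction a with
  | zero => simp [rep]
  | succ n ih => simpa [rep, List.replicate_succ, lhsW] using ih

lemma iuc_U (l : List Step) : iuc (U :: l) = leadH l := rfl

end BGaux
namespace BGaux
open Step List

/-! ### semi lemmas -/

lemma semi_append (u v : List Step) : semi (u ++ v) = semi u + semi v := by
  simp [semi, List.count_append]; omega

lemma semi_cons (s : Step) (l : List Step) :
    semi (s :: l) = (if s = U ∨ s = H then 1 else 0) + semi l := by
  cases s <;> simp [semi, List.count_cons] <;> omega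

lemma semi_rep (k : ℕ) (s : Step) :
    semi (rep k s) = if s = D then 0 else k := by
  cases s <;> simp [semi, rep, List.count_replicate]

/-! ### prefix split -/

lemma prefix_split : ∀ (u : List Step) {p v : List Step}, p <+: u ++ v →
    p <+: u ∨ ∃ q, q <+: v ∧ p = u ++ q := by
  intro u
  induction u with
  | nil => intro p v h; right; exact ⟨p, by simpa using h, rfl⟩
  | cons a u ih =>
    intro p v h
    cases p with
    | nil => left; exact List.nil_prefix
    | cons b p' =>
      rw [List.cons_append, List.cons_prefix_cons] at h
      obtain ⟨rfl, h'⟩ := h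
      rcases ih h' with h1 | ⟨q, hq, rfl⟩
      · left; exact List.cons_prefix_cons.mpr ⟨rfl, h1⟩
      · right; exact ⟨q, hq, rfl⟩

/-! ### two-letter infix analysis -/

lemma pair_infix_cases {a b : Step} : ∀ (u : List Step) {v : List Step},
    [a, b] <:+: u ++ v →
    [a, b] <:+: u ∨ [a, b] <:+: v ∨ (u.getLast? = some a ∧ v.head? = some b) := by
  intro u
  induction u with
  | nil => intro v h; right; left; simpa using h
  | cons s u ih =>
    intro v h
    rw [List.cons_append, List.infix_cons_iff] at h
    rcases h with h | h
    · -- [a,b] <+: s :: (u ++ v)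
      rw [List.cons_prefix_cons] at h
      obtain ⟨rfl, h'⟩ := h
      cases u with
      | nil =>
        cases v with
        | nil => simp at h'
        | cons c v' =>
          simp only [List.nil_append, List.cons_prefix_cons] at h'
          obtain ⟨rfl, -⟩ := h'
          right; right; simp
      | cons d u' =>
        simp only [List.cons_append, List.cons_prefix_cons] at h'
        obtain ⟨rfl, -⟩ := h'
        left
        exact ⟨[], u', by simp⟩
    · rcases ih h with h1 | h1 | h1
      · left; exact h1.trans (List.suffix_cons s u).isInfix
      · right; left; exact h1
      · right; right
        refine ⟨?_, h1.2⟩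
        cases u with
        | nil => simp at h1
        | cons x xs => rw [List.getLast?_cons_cons]; exact h1.1

lemma infix_of_infix_right {l u v : List Step} (h : l <:+: v) : l <:+: u ++ v :=
  h.trans (List.suffix_append u v).isInfix

end BGaux
namespace BGaux
open Step List

lemma head?_prefix {p w : List Step} (h : p <+: w) (hp : p ≠ []) :
    p.head? = w.head? := by
  obtain ⟨t, rfl⟩ := h
  cases p with
  | nil => exact absurd rfl hp
  | cons a l => simp

lemma cornerless_transfer {P P' x : List Step}
    (hPD : D ∉ P') (hPl : P.getLast? = some H) (hP'l : P'.getLast? = some H)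
    (hc : Cornerless (P ++ x)) : Cornerless (P' ++ x) := by
  obtain ⟨h1, h2⟩ := hc
  constructor
  · intro h
    rcases pair_infix_cases P' h with h' | h' | h'
    · exact hPD (h'.sublist.mem (by simp))
    · exact h1 (infix_of_infix_right h')
    · rw [hP'l] at h'; exact absurd h'.1 (by simp)
  · intro h
    rcases pair_infix_cases P' h with h' | h' | h'
    · exact hPD (h'.sublist.mem (by simp))
    · exact h2 (infix_of_infix_right h')
    · rw [hP'l] at h'; exact absurd h'.1 (by simp)

lemma bargraph_transfer {P P' x : List Step}
    (hPD : D ∉ P) (hP'D : D ∉ P')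
    (hPh : P.head? = some U) (hP'h : P'.head? = some U)
    (hPl : P.getLast? = some H) (hP'l : P'.getLast? = some H)
    (hhgt : hgt P = hgt P') (hlen : 2 ≤ P'.length)
    (hb : IsBargraph (P ++ x)) : IsBargraph (P' ++ x) := by
  obtain ⟨hblen, hbh, hbp, hbc⟩ := hb
  refine ⟨?_, ?_, ?_, ?_⟩
  · rw [List.length_append]; omega
  · rw [hgt_append] at hbh ⊢; omega
  · intro p hp hpne hpw
    rcases prefix_split P' hp with h' | ⟨q, hq, rfl⟩
    · refine hgt_pos_of_D_free (fun hm => hP'D (h'.sublist.mem hm)) ?_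
      rw [head?_prefix h' hpne, hP'h]
    · have hq' : q ≠ x := by rintro rfl; exact hpw rfl
      have hP : P ≠ [] := by rintro rfl; simp at hPh
      have : 0 < hgt (P ++ q) := by
        refine hbp _ ?_ (by simp [hP]) ?_
        · obtain ⟨t, rfl⟩ := hq; exact ⟨t, by simp⟩
        · intro hcontra
          exact hq' (List.append_cancel_left hcontra)
      rw [hgt_append] at this ⊢
      omega
  · exact cornerless_transfer hP'D hPl hP'l hbc

end BGaux
namespace BGaux
open Step List

lemma UD_infix {c : ℕ} (hc : 1 ≤ c) (r : List Step) :
    [U, D] <:+: rep c U ++ D :: r := by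
  obtain ⟨c', rfl⟩ : ∃ c', c = c' + 1 := ⟨c - 1, by omega⟩
  refine ⟨rep c' U, r, ?_⟩
  simp [rep, List.replicate_succ']

lemma bargraph_head {w : List Step} (hb : IsBargraph w) : w.head? = some U := by
  obtain ⟨hlen, hh, hp, hc⟩ := hb
  cases w with
  | nil => simp at hlen
  | cons s l =>
    have hl : l ≠ [] := by
      rintro rfl; simp at hlen
    have := hp [s] ⟨l, rfl⟩ (by simp) (by simp [hl])
    cases s
    · simp
    · simp [hgt_cons, hgt_nil, Step.val] at this
    · simp [hgt_cons, hgt_nil, Step.val] at this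

lemma A_decomp {n h : ℕ} {w : List Step} (hh1 : 1 ≤ h) (hh2 : h + 2 ≤ n)
    (hb : IsBargraph w) (hs : semi w = n) (hl : lhsW w = h) :
    ∃ a x, 1 ≤ a ∧ w = rep a U ++ (rep h H ++ x) ∧ x.head? ≠ some H ∧
      (2 ≤ a ∨ (a = 1 ∧ ∃ c y, 1 ≤ c ∧ x = rep c U ++ H :: y)) := by
  have hw0 : w.head? = some U := bargraph_head hb
  obtain ⟨hd1, hd2⟩ := leadU_decomp w
  set a := leadU w with ha
  set r := w.drop a with hr
  have ha1 : 1 ≤ a := by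
    rcases Nat.eq_zero_or_pos a with h0 | h0
    · rw [h0] at hd1; simp [rep] at hd1
      rw [← hd1] at hd2; exact absurd hw0 hd2
    · exact h0
  -- r starts with H
  have hrH : ∃ r', r = H :: r' := by
    cases hr2 : r with
    | nil =>
      exfalso
      have := hb.2.1
      rw [hd1, hr2] at this
      simp [hgt_append, hgt_repU, hgt_nil] at this
      omega
    | cons s r' =>
      cases s with
      | H => exact ⟨r', rfl⟩
      | U => exfalso; rw [hr2] at hd2; simp at hd2
      | D =>
        exfalso
        have : [U, D] <:+: w := by
          rw [hd1, hr2]; exact UD_infix ha1 r'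
        exact hb.2.2.2.1 this
  obtain ⟨r', hrr⟩ := hrH
  obtain ⟨he1, he2⟩ := leadH_decomp r
  set k := leadH r with hk
  set x := r.drop k with hx
  have hk1 : 1 ≤ k := by
    rcases Nat.eq_zero_or_pos k with h0 | h0
    · rw [h0] at he1; simp [rep] at he1
      rw [← he1, hrr] at he2; simp at he2
    · exact h0
  have hkh : k = h := by
    have : lhsW w = k := by
      rw [hd1, lhsW_repU_append, he1]
      have : rep k H ++ x = H :: (rep (k-1) H ++ x) := by
        have : k = (k - 1) + 1 := by omega
        rw [this, rep, List.replicate_succ]; simp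
      rw [this, lhsW_H, leadH_repH_append, leadH_eq_zero he2]
      omega
    omega
  have hw : w = rep a U ++ (rep h H ++ x) := by
    rw [hd1, he1, hkh]
  rcases Nat.lt_or_ge a 2 with ha2 | ha2
  · -- a = 1
    have ha1' : a = 1 := by omega
    have hxne : x ≠ [] := by
      intro h0
      have := hb.2.1
      rw [hw, h0] at this
      simp [hgt_append, hgt_repU, hgt_repH, hgt_nil] at this
      omega
    have hxU : ∃ x', x = U :: x' := by
      cases hx2 : x with
      | nil => exact absurd hx2 hxne
      | cons s x' =>
        cases s with
        | U => exact ⟨x', rfl⟩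
        | H => exfalso; rw [hx2] at he2; simp at he2
        | D =>
          exfalso
          set p := rep a U ++ (rep h H ++ [D]) with hp
          have hpw : p <+: w := by
            rw [hw, hx2]
            exact ⟨x', by simp [hp]⟩
          have hph : hgt p = 0 := by
            simp [hp, hgt_append, hgt_repU, hgt_repH, hgt_cons, hgt_nil, Step.val]
            omega
          have hpne : p ≠ [] := by simp [hp, rep]
          rcases eq_or_ne p w with hpw' | hpw'
          · have : semi w = a + h := by
              rw [← hpw', hp, semi_append, semi_append, semi_rep, semi_rep, semi_cons]
              simp [semi]
            omega
          · have := hb.2.2.1 p hpw hpne hpw'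
            omega
    obtain ⟨x', hxx⟩ := hxU
    obtain ⟨hf1, hf2⟩ := leadU_decomp x
    set c := leadU x with hc
    set x₂ := x.drop c with hx₂
    have hc1 : 1 ≤ c := by
      rcases Nat.eq_zero_or_pos c with h0 | h0
      · rw [h0] at hf1; simp [rep] at hf1
        rw [← hf1, hxx] at hf2; simp at hf2
      · exact h0
    have hx₂H : ∃ y, x₂ = H :: y := by
      cases hg : x₂ with
      | nil =>
        exfalso
        have := hb.2.1
        rw [hw, hf1, hg] at this
        simp [hgt_append, hgt_repU, hgt_repH, hgt_nil] at this
        omega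
      | cons s y =>
        cases s with
        | H => exact ⟨y, rfl⟩
        | U => exfalso; rw [hg] at hf2; simp at hf2
        | D =>
          exfalso
          have : [U, D] <:+: w := by
            rw [hw, hf1, hg]
            exact infix_of_infix_right (infix_of_infix_right (UD_infix hc1 y))
          exact hb.2.2.2.1 this
    obtain ⟨y, hy⟩ := hx₂H
    exact ⟨a, x, ha1, hw, by rw [hxx]; simp, Or.inr ⟨ha1', c, y, hc1, by rw [hf1, hy]⟩⟩
  · exact ⟨a, x, ha1, hw, he2, Or.inl ha2⟩

lemma B_decomp {n h : ℕ} {v : List Step} (hh1 : 1 ≤ h) (hh2 : h + 2 ≤ n)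
    (hb : IsBargraph v) (hs : semi v = n) (hi : iuc v = h - 1) :
    ∃ b t, 1 ≤ b ∧ v = U :: (rep (h-1) H ++ (rep b U ++ H :: t)) := by
  have hw0 : v.head? = some U := bargraph_head hb
  obtain ⟨v', rfl⟩ : ∃ v', v = U :: v' := by
    cases v with
    | nil => simp at hw0
    | cons s l => simp at hw0; exact ⟨l, by rw [hw0]⟩
  rw [iuc_U] at hi
  obtain ⟨he1, he2⟩ := leadH_decomp v'
  rw [hi] at he1 he2
  set z := v'.drop (h-1) with hz
  -- z starts with U
  have hzU : ∃ z', z = U :: z' := by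
    cases hz2 : z with
    | nil =>
      exfalso
      have := hb.2.1
      rw [he1, hz2] at this
      simp [hgt_append, hgt_repH, hgt_cons, hgt_nil, Step.val] at this
    | cons s z' =>
      cases s with
      | U => exact ⟨z', rfl⟩
      | H => exfalso; rw [hz2] at he2; simp at he2
      | D =>
        exfalso
        set p : List Step := U :: (rep (h-1) H ++ [D]) with hp
        have hpw : p <+: U :: v' := by
          rw [he1, hz2]
          exact ⟨z', by simp [hp]⟩
        have hph : hgt p = 0 := by
          simp [hp, hgt_append, hgt_repH, hgt_cons, hgt_nil, Step.val]
        have hpne : p ≠ [] := by simp [hp]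
        rcases eq_or_ne p (U :: v') with hpw' | hpw'
        · have : semi (U :: v') = h := by
            rw [← hpw', hp, semi_cons, semi_append, semi_rep, semi_cons]
            simp [semi]
            omega
          omega
        · have := hb.2.2.1 p hpw hpne hpw'
          omega
  obtain ⟨z', hzz⟩ := hzU
  obtain ⟨hf1, hf2⟩ := leadU_decomp z
  set b := leadU z with hbz
  set z₂ := z.drop b with hz₂
  have hb1 : 1 ≤ b := by
    rcases Nat.eq_zero_or_pos b with h0 | h0
    · rw [h0] at hf1; simp [rep] at hf1
      rw [← hf1, hzz] at hf2; simp at hf2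
    · exact h0
  have hz₂H : ∃ t, z₂ = H :: t := by
    cases hg : z₂ with
    | nil =>
      exfalso
      have := hb.2.1
      rw [he1, hf1, hg] at this
      simp [hgt_append, hgt_repH, hgt_repU, hgt_cons, hgt_nil, Step.val] at this
      omega
    | cons s t =>
      cases s with
      | H => exact ⟨t, rfl⟩
      | U => exfalso; rw [hg] at hf2; simp at hf2
      | D =>
        exfalso
        have h1 : [U, D] <:+: rep (h-1) H ++ (rep b U ++ D :: t) :=
          infix_of_infix_right (UD_infix hb1 t)
        have h2 : [U, D] <:+: U :: (rep (h-1) H ++ (rep b U ++ D :: t)) :=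
          h1.trans (List.suffix_cons U _).isInfix
        have : [U, D] <:+: U :: v' := by rw [he1, hf1, hg]; exact h2
        exact hb.2.2.2.1 this
  obtain ⟨t, ht⟩ := hz₂H
  exact ⟨b, t, hb1, by rw [he1, hf1, ht]⟩

end BGaux
namespace BGaux
open Step List

lemma drop_rep (k : ℕ) (s : Step) (n : ℕ) (l : List Step) :
    (rep k s ++ l).drop (k + n) = l.drop n := by
  have := List.drop_length_add_append (l₁ := rep k s) (l₂ := l) n
  simpa [rep] using this

lemma drop_rep0 (k : ℕ) (s : Step) (l : List Step) :
    (rep k s ++ l).drop k = l := by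
  simpa using drop_rep k s 0 l

lemma leadU_repH_append (k : ℕ) (l : List Step) (hk : 1 ≤ k) :
    leadU (rep k H ++ l) = 0 := by
  obtain ⟨k', rfl⟩ : ∃ k', k = k' + 1 := ⟨k - 1, by omega⟩
  simp [rep, List.replicate_succ, leadU_H]

/-- The forward map on words: `U^a H^h x ↦ U H^{h-1} U^{a-1} H x` (case `a ≥ 2`),
`U H^h U^c H y ↦ U H^{h-1} U^c H H y` (case `a = 1`). -/
def Fm (h : ℕ) (w : List Step) : List Step :=
  if 2 ≤ leadU w then
    U :: (rep (h-1) H ++ (rep (leadU w - 1) U ++ (H :: w.drop (leadU w + h))))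
  else
    U :: (rep (h-1) H ++ (rep (leadU (w.drop (h+1))) U ++
      (H :: H :: w.drop (h + 2 + leadU (w.drop (h+1))))))

/-- The backward map. -/
def Gm (h : ℕ) (v : List Step) : List Step :=
  if (v.drop (h + leadU (v.drop h) + 1)).head? = some H then
    U :: (rep h H ++ (rep (leadU (v.drop h)) U ++
      (H :: (v.drop (h + leadU (v.drop h) + 1)).tail)))
  else
    rep (leadU (v.drop h) + 1) U ++ (rep h H ++ v.drop (h + leadU (v.drop h) + 1))

lemma Fm_eq1 (h' a' : ℕ) (x : List Step) :
    Fm (h'+1) (rep (a'+2) U ++ (rep (h'+1) H ++ x)) =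
      U :: (rep h' H ++ (rep (a'+1) U ++ (H :: x))) := by
  have hU : leadU (rep (a'+2) U ++ (rep (h'+1) H ++ x)) = a' + 2 := by
    rw [leadU_repU_append, leadU_repH_append _ _ (by omega)]
  rw [Fm, hU]
  simp only [show 2 ≤ a' + 2 from by omega, if_true]
  rw [show a' + 2 + (h' + 1) = a' + 2 + (h' + 1) from rfl]
  rw [drop_rep (a'+2) U (h'+1), drop_rep0 (h'+1) H x]
  norm_num

lemma Fm_eq2 (h' c' : ℕ) (y : List Step) :
    Fm (h'+1) (U :: (rep (h'+1) H ++ (rep (c'+1) U ++ (H :: y)))) =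
      U :: (rep h' H ++ (rep (c'+1) U ++ (H :: H :: y))) := by
  have hU : leadU (U :: (rep (h'+1) H ++ (rep (c'+1) U ++ (H :: y)))) = 1 := by
    rw [leadU_U, leadU_repH_append _ _ (by omega)]
  have hd1 : (U :: (rep (h'+1) H ++ (rep (c'+1) U ++ (H :: y)))).drop (h' + 1 + 1)
      = rep (c'+1) U ++ (H :: y) := by
    rw [List.drop_succ_cons, drop_rep0]
  have hc : leadU (rep (c'+1) U ++ (H :: y)) = c' + 1 := by
    rw [leadU_repU_append, leadU_H]
  rw [Fm, hU]
  simp only [show ¬ (2 ≤ 1) from by omega, if_false]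
  rw [show h' + 1 + 1 = h' + 2 from rfl] at hd1
  rw [show h' + 1 + 1 = h' + 2 from rfl, hd1, hc]
  have hd2 : (U :: (rep (h'+1) H ++ (rep (c'+1) U ++ (H :: y)))).drop
      (h' + 1 + 2 + (c' + 1)) = y := by
    rw [show h' + 1 + 2 + (c' + 1) = ((h'+1) + ((c'+1) + 1)) + 1 from by omega,
      List.drop_succ_cons, drop_rep (h'+1) H, drop_rep (c'+1) U 1]
    simp
  rw [hd2]
  norm_num

lemma Gm_eq1 (h' b' : ℕ) (t : List Step) (ht : t.head? ≠ some H) :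
    Gm (h'+1) (U :: (rep h' H ++ (rep (b'+1) U ++ (H :: t)))) =
      rep (b'+2) U ++ (rep (h'+1) H ++ t) := by
  have hd0 : (U :: (rep h' H ++ (rep (b'+1) U ++ (H :: t)))).drop (h'+1)
      = rep (b'+1) U ++ (H :: t) := by
    rw [List.drop_succ_cons, drop_rep0]
  have hb : leadU (rep (b'+1) U ++ (H :: t)) = b' + 1 := by
    rw [leadU_repU_append, leadU_H]
  have hd1 : (U :: (rep h' H ++ (rep (b'+1) U ++ (H :: t)))).drop
      ((h'+1) + (b'+1) + 1) = t := by
    rw [show (h'+1) + (b'+1) + 1 = (h' + ((b'+1) + 1)) + 1 from by omega,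
      List.drop_succ_cons, drop_rep h' H, drop_rep (b'+1) U 1]
    simp
  rw [Gm, hd0, hb, hd1]
  simp only [ht, if_false]

lemma Gm_eq2 (h' b' : ℕ) (t : List Step) :
    Gm (h'+1) (U :: (rep h' H ++ (rep (b'+1) U ++ (H :: H :: t)))) =
      U :: (rep (h'+1) H ++ (rep (b'+1) U ++ (H :: t))) := by
  have hd0 : (U :: (rep h' H ++ (rep (b'+1) U ++ (H :: H :: t)))).drop (h'+1)
      = rep (b'+1) U ++ (H :: H :: t) := by
    rw [List.drop_succ_cons, drop_rep0]
  have hb : leadU (rep (b'+1) U ++ (H :: H :: t)) = b' + 1 := by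
    rw [leadU_repU_append, leadU_H]
  have hd1 : (U :: (rep h' H ++ (rep (b'+1) U ++ (H :: H :: t)))).drop
      ((h'+1) + (b'+1) + 1) = H :: t := by
    rw [show (h'+1) + (b'+1) + 1 = (h' + ((b'+1) + 1)) + 1 from by omega,
      List.drop_succ_cons, drop_rep h' H, drop_rep (b'+1) U 1]
    simp
  rw [Gm, hd0, hb, hd1]
  simp only [List.head?_cons, if_true]
  norm_num

end BGaux
namespace BGaux
open Step List

lemma lhsW_U (l : List Step) : lhsW (U :: l) = lhsW l := rfl

lemma notD_repU_repH (k m : ℕ) : D ∉ rep k U ++ rep m H := by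
  simp [rep, List.mem_replicate]

lemma getLast?_repH (m : ℕ) (hm : 1 ≤ m) : (rep m H).getLast? = some H := by
  obtain ⟨m', rfl⟩ : ∃ m', m = m' + 1 := ⟨m - 1, by omega⟩
  rw [rep, List.replicate_succ']
  exact List.getLast?_concat

lemma bargraph_fwd1 (h' a' : ℕ) (x : List Step)
    (hb : IsBargraph (rep (a'+2) U ++ (rep (h'+1) H ++ x))) :
    IsBargraph (U :: (rep h' H ++ (rep (a'+1) U ++ (H :: x)))) := by
  have h1 : rep (a'+2) U ++ (rep (h'+1) H ++ x)
      = (rep (a'+2) U ++ rep (h'+1) H) ++ x := by simp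
  have h2 : U :: (rep h' H ++ (rep (a'+1) U ++ (H :: x)))
      = (U :: (rep h' H ++ (rep (a'+1) U ++ [H]))) ++ x := by simp
  rw [h1] at hb
  rw [h2]
  refine bargraph_transfer ?_ ?_ ?_ ?_ ?_ ?_ ?_ ?_ hb
  · exact notD_repU_repH _ _
  · simp [rep, List.mem_replicate]
  · simp [rep, List.replicate_succ]
  · simp
  · rw [List.getLast?_append, getLast?_repH _ (by omega)]; rfl
  · have : U :: (rep h' H ++ (rep (a'+1) U ++ [H]))
        = (U :: (rep h' H ++ rep (a'+1) U)) ++ [H] := by simp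
    rw [this]; exact List.getLast?_concat
  · simp [hgt_append, hgt_repU, hgt_repH, hgt_cons, hgt_nil, Step.val] <;> omega
  · simp <;> omega

lemma bargraph_fwd2 (h' c' : ℕ) (y : List Step)
    (hb : IsBargraph (U :: (rep (h'+1) H ++ (rep (c'+1) U ++ (H :: y))))) :
    IsBargraph (U :: (rep h' H ++ (rep (c'+1) U ++ (H :: H :: y)))) := by
  have h1 : U :: (rep (h'+1) H ++ (rep (c'+1) U ++ (H :: y)))
      = (U :: (rep (h'+1) H ++ (rep (c'+1) U ++ [H]))) ++ y := by simp
  have h2 : U :: (rep h' H ++ (rep (c'+1) U ++ (H :: H :: y)))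
      = (U :: (rep h' H ++ (rep (c'+1) U ++ [H, H]))) ++ y := by simp
  rw [h1] at hb
  rw [h2]
  refine bargraph_transfer ?_ ?_ ?_ ?_ ?_ ?_ ?_ ?_ hb
  · simp [rep, List.mem_replicate]
  · simp [rep, List.mem_replicate]
  · simp
  · simp
  · have : U :: (rep (h'+1) H ++ (rep (c'+1) U ++ [H]))
        = (U :: (rep (h'+1) H ++ rep (c'+1) U)) ++ [H] := by simp
    rw [this]; exact List.getLast?_concat
  · have : U :: (rep h' H ++ (rep (c'+1) U ++ [H, H]))
        = (U :: (rep h' H ++ (rep (c'+1) U ++ [H]))) ++ [H] := by simp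
    rw [this]; exact List.getLast?_concat
  · simp [hgt_append, hgt_repU, hgt_repH, hgt_cons, hgt_nil, Step.val] <;> omega
  · simp <;> omega

lemma bargraph_bwd1 (h' b' : ℕ) (t : List Step)
    (hb : IsBargraph (U :: (rep h' H ++ (rep (b'+1) U ++ (H :: t))))) :
    IsBargraph (rep (b'+2) U ++ (rep (h'+1) H ++ t)) := by
  have h1 : U :: (rep h' H ++ (rep (b'+1) U ++ (H :: t)))
      = (U :: (rep h' H ++ (rep (b'+1) U ++ [H]))) ++ t := by simp
  have h2 : rep (b'+2) U ++ (rep (h'+1) H ++ t)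
      = (rep (b'+2) U ++ rep (h'+1) H) ++ t := by simp
  rw [h1] at hb
  rw [h2]
  refine bargraph_transfer ?_ ?_ ?_ ?_ ?_ ?_ ?_ ?_ hb
  · simp [rep, List.mem_replicate]
  · exact notD_repU_repH _ _
  · simp
  · simp [rep, List.replicate_succ]
  · have : U :: (rep h' H ++ (rep (b'+1) U ++ [H]))
        = (U :: (rep h' H ++ rep (b'+1) U)) ++ [H] := by simp
    rw [this]; exact List.getLast?_concat
  · rw [List.getLast?_append, getLast?_repH _ (by omega)]; rfl
  · simp [hgt_append, hgt_repU, hgt_repH, hgt_cons, hgt_nil, Step.val] <;> omega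
  · simp [rep] <;> omega

lemma bargraph_bwd2 (h' b' : ℕ) (t : List Step)
    (hb : IsBargraph (U :: (rep h' H ++ (rep (b'+1) U ++ (H :: H :: t))))) :
    IsBargraph (U :: (rep (h'+1) H ++ (rep (b'+1) U ++ (H :: t)))) := by
  have h1 : U :: (rep h' H ++ (rep (b'+1) U ++ (H :: H :: t)))
      = (U :: (rep h' H ++ (rep (b'+1) U ++ [H, H]))) ++ t := by simp
  have h2 : U :: (rep (h'+1) H ++ (rep (b'+1) U ++ (H :: t)))
      = (U :: (rep (h'+1) H ++ (rep (b'+1) U ++ [H]))) ++ t := by simp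
  rw [h1] at hb
  rw [h2]
  refine bargraph_transfer ?_ ?_ ?_ ?_ ?_ ?_ ?_ ?_ hb
  · simp [rep, List.mem_replicate]
  · simp [rep, List.mem_replicate]
  · simp
  · simp
  · have : U :: (rep h' H ++ (rep (b'+1) U ++ [H, H]))
        = (U :: (rep h' H ++ (rep (b'+1) U ++ [H]))) ++ [H] := by simp
    rw [this]; exact List.getLast?_concat
  · have : U :: (rep (h'+1) H ++ (rep (b'+1) U ++ [H]))
        = (U :: (rep (h'+1) H ++ rep (b'+1) U)) ++ [H] := by simp
    rw [this]; exact List.getLast?_concat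
  · simp [hgt_append, hgt_repU, hgt_repH, hgt_cons, hgt_nil, Step.val] <;> omega
  · simp <;> omega

end BGaux
namespace BGaux
open Step List

lemma rep_succ_cons (k : ℕ) (s : Step) (l : List Step) :
    rep (k+1) s ++ l = s :: (rep k s ++ l) := by simp [rep, List.replicate_succ]

lemma main_fwd {n h : ℕ} (hh1 : 1 ≤ h) (hh2 : h + 2 ≤ n) {w : List Step}
    (hw : IsBargraph w ∧ semi w = n ∧ lhsW w = h) :
    (IsBargraph (Fm h w) ∧ semi (Fm h w) = n ∧ iuc (Fm h w) = h - 1)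
      ∧ Gm h (Fm h w) = w := by
  obtain ⟨hb, hs, hl⟩ := hw
  obtain ⟨a, x, ha1, hweq, hxh, hcase⟩ := A_decomp hh1 hh2 hb hs hl
  obtain ⟨h', rfl⟩ : ∃ h'', h = h'' + 1 := ⟨h - 1, by omega⟩
  rcases hcase with ha2 | ⟨ha1', c, y, hc1, hxeq⟩
  · obtain ⟨a', rfl⟩ : ∃ a'', a = a'' + 2 := ⟨a - 2, by omega⟩
    rw [hweq, Fm_eq1]
    refine ⟨⟨bargraph_fwd1 h' a' x (hweq ▸ hb), ?_, ?_⟩, ?_⟩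
    · rw [hweq] at hs
      simp only [semi_append, semi_cons, semi_rep] at hs ⊢
      simp at hs ⊢; omega
    · rw [iuc_U, leadH_repH_append, leadH_eq_zero (l := rep (a'+1) U ++ (H :: x))]
      · omega
      · simp [rep, List.replicate_succ]
    · rw [Gm_eq1 h' a' x hxh]
  · obtain ⟨c', rfl⟩ : ∃ c'', c = c'' + 1 := ⟨c - 1, by omega⟩
    subst ha1'
    have hweq' : w = U :: (rep (h'+1) H ++ (rep (c'+1) U ++ (H :: y))) := by
      rw [hweq, hxeq]; simp [rep]
    rw [hweq', Fm_eq2]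
    refine ⟨⟨bargraph_fwd2 h' c' y (hweq' ▸ hb), ?_, ?_⟩, ?_⟩
    · rw [hweq'] at hs
      simp only [semi_append, semi_cons, semi_rep] at hs ⊢
      simp at hs ⊢; omega
    · rw [iuc_U, leadH_repH_append, leadH_eq_zero (l := rep (c'+1) U ++ (H :: H :: y))]
      · omega
      · simp [rep, List.replicate_succ]
    · rw [Gm_eq2 h' c' y]

lemma main_bwd {n h : ℕ} (hh1 : 1 ≤ h) (hh2 : h + 2 ≤ n) {v : List Step}
    (hv : IsBargraph v ∧ semi v = n ∧ iuc v = h - 1) :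
    (IsBargraph (Gm h v) ∧ semi (Gm h v) = n ∧ lhsW (Gm h v) = h)
      ∧ Fm h (Gm h v) = v := by
  obtain ⟨hb, hs, hi⟩ := hv
  obtain ⟨b, t, hb1, hveq⟩ := B_decomp hh1 hh2 hb hs hi
  obtain ⟨h', rfl⟩ : ∃ h'', h = h'' + 1 := ⟨h - 1, by omega⟩
  obtain ⟨b', rfl⟩ : ∃ b'', b = b'' + 1 := ⟨b - 1, by omega⟩
  simp only [Nat.add_sub_cancel] at hveq
  by_cases hth : t.head? = some H
  · obtain ⟨t₂, rfl⟩ : ∃ t₂, t = H :: t₂ := by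
      cases t with
      | nil => simp at hth
      | cons s t₂ => simp at hth; exact ⟨t₂, by rw [hth]⟩
    rw [hveq, Gm_eq2]
    refine ⟨⟨bargraph_bwd2 h' b' t₂ (hveq ▸ hb), ?_, ?_⟩, ?_⟩
    · rw [hveq] at hs
      simp only [semi_append, semi_cons, semi_rep] at hs ⊢
      simp at hs ⊢; omega
    · have hz : leadH (rep (b'+1) U ++ (H :: t₂)) = 0 :=
        leadH_eq_zero (by simp [rep, List.replicate_succ])
      rw [lhsW_U, rep_succ_cons, lhsW_H, leadH_repH_append, hz]
    · rw [Fm_eq2 h' b' t₂]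
  · rw [hveq, Gm_eq1 h' b' t hth]
    refine ⟨⟨bargraph_bwd1 h' b' t (hveq ▸ hb), ?_, ?_⟩, ?_⟩
    · rw [hveq] at hs
      simp only [semi_append, semi_cons, semi_rep] at hs ⊢
      simp at hs ⊢; omega
    · rw [lhsW_repU_append, rep_succ_cons, lhsW_H, leadH_repH_append,
        leadH_eq_zero hth]
    · rw [Fm_eq1 h' b' t]

end BGaux
/-- for `2 ≤ n` and `1 ≤ h ≤ n - 2`, bargraphs of semiperimeter `n` with
leftmost horizontal segment of width `h` are equinumerous with bargraphs of
semiperimeter `n` having exactly `h - 1` initial columns of height 1. -/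
theorem lhs_iuc_equidistributed :
    ∀ n h : ℕ, 2 ≤ n → 1 ≤ h → h ≤ n - 2 →
      Nat.card {w : List Step // IsBargraph w ∧ semi w = n ∧ lhsW w = h}
        = Nat.card {w : List Step // IsBargraph w ∧ semi w = n ∧ iuc w = h - 1} := by
  intro n h hn hh1 hh2
  have hh2' : h + 2 ≤ n := by omega
  apply Nat.card_congr
  exact {
    toFun := fun p => ⟨BGaux.Fm h p.1, (BGaux.main_fwd hh1 hh2' p.2).1⟩
    invFun := fun q => ⟨BGaux.Gm h q.1, (BGaux.main_bwd hh1 hh2' q.2).1⟩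
    left_inv := fun p => Subtype.ext (BGaux.main_fwd hh1 hh2' p.2).2
    right_inv := fun q => Subtype.ext (BGaux.main_bwd hh1 hh2' q.2).2 }
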